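/- Let γ ∈ (0,1) and b ∈ (0,1]. Suppose ω₀ : ℝ² → ℝ satisfies |ω₀(x) − ω₀(y)| ≤ (−log |x−y|)^{−γ}·log(−log |x−y|) for all x, y ∈ ℝ² with 0 < |x−y| ≤ exp(−e^{1/γ}), and suppose Ψ : ℝ² → ℝ² satisfies |Ψ(x) − Ψ(y)| ≤ |x−y|^b for all x, y with |x−y| ≤ exp(−e^{1/γ}/b). Then for all x, y with 0 < |x−y| ≤ exp(−e^{1/γ}/b) one has |ω₀(Ψ(x)) − ω₀(Ψ(y))| ≤ b^{−γ}·(−log |x−y|)^{−γ}·log(−log |x−y|). -/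

import Mathlib

open Real Set

lemma aux_anti (γ : ℝ) (hγ : 0 < γ) :
    AntitoneOn (fun u : ℝ => u ^ (-γ) * Real.log u) (Set.Ici (Real.exp (1/γ))) := by
  have hE : (0:ℝ) < Real.exp (1/γ) := Real.exp_pos _
  have hcont : ContinuousOn (fun u : ℝ => u ^ (-γ) * Real.log u) (Set.Ici (Real.exp (1/γ))) := by
    apply continuousOn_of_forall_continuousAt
    intro u hu
    have hu0 : 0 < u := lt_of_lt_of_le hE hu
    exact (Real.continuousAt_rpow_const u (-γ) (Or.inl hu0.ne')).mul
      (Real.continuousAt_log hu0.ne')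
  apply StrictAntiOn.antitoneOn
  apply strictAntiOn_of_deriv_neg (convex_Ici _) hcont
  intro u hu
  rw [interior_Ici] at hu
  have hu0 : 0 < u := lt_trans hE hu
  have hd : HasDerivAt (fun u : ℝ => u ^ (-γ) * Real.log u)
      (-γ * u ^ (-γ - 1) * Real.log u + u ^ (-γ) * u⁻¹) u := by
    have h1 := Real.hasDerivAt_rpow_const (x := u) (p := -γ) (Or.inl hu0.ne')
    have h2 := Real.hasDerivAt_log hu0.ne'
    exact h1.mul h2
  rw [hd.deriv]
  have h1 : u ^ (-γ) * u⁻¹ = u ^ (-γ - 1) := by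
    rw [Real.rpow_sub hu0, Real.rpow_one, div_eq_mul_inv]
  rw [h1]
  have heq : -γ * u ^ (-γ - 1) * Real.log u + u ^ (-γ - 1)
      = u ^ (-γ - 1) * (1 - γ * Real.log u) := by ring
  rw [heq]
  apply mul_neg_of_pos_of_neg (Real.rpow_pos_of_pos hu0 _)
  have hlog : 1 / γ < Real.log u := by
    rw [← Real.log_exp (1/γ)]
    exact Real.log_lt_log hE hu
  have : 1 < γ * Real.log u := by
    rw [div_lt_iff₀' hγ] at hlog
    linarith
  linarith

theorem propagation_loglog_modulus (γ b : ℝ) (hγ0 : 0 < γ) (hγ1 : γ < 1)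
    (hb0 : 0 < b) (hb1 : b ≤ 1)
    (ω₀ : EuclideanSpace ℝ (Fin 2) → ℝ)
    (hω : ∀ x y : EuclideanSpace ℝ (Fin 2), 0 < ‖x - y‖ →
      ‖x - y‖ ≤ Real.exp (-(Real.exp (1/γ))) →
      |ω₀ x - ω₀ y| ≤ (-Real.log ‖x - y‖) ^ (-γ) * Real.log (-Real.log ‖x - y‖))
    (Ψ : EuclideanSpace ℝ (Fin 2) → EuclideanSpace ℝ (Fin 2))
    (hΨ : ∀ x y : EuclideanSpace ℝ (Fin 2),
      ‖x - y‖ ≤ Real.exp (-(Real.exp (1/γ)) / b) → ‖Ψ x - Ψ y‖ ≤ ‖x - y‖ ^ b) :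
    ∀ x y : EuclideanSpace ℝ (Fin 2), 0 < ‖x - y‖ →
      ‖x - y‖ ≤ Real.exp (-(Real.exp (1/γ)) / b) →
      |ω₀ (Ψ x) - ω₀ (Ψ y)| ≤
        b ^ (-γ) * (-Real.log ‖x - y‖) ^ (-γ) * Real.log (-Real.log ‖x - y‖) := by
  intro x y hr0 hr
  set r := ‖x - y‖ with hrdef
  set L := -Real.log r with hLdef
  have hE : (0:ℝ) < Real.exp (1/γ) := Real.exp_pos _
  have hE1 : (1:ℝ) < Real.exp (1/γ) := by
    have : (0:ℝ) < 1/γ := by positivity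
    calc (1:ℝ) = Real.exp 0 := (Real.exp_zero).symm
    _ < Real.exp (1/γ) := Real.exp_lt_exp.mpr this
  -- L ≥ e^{1/γ}/b
  have hL : Real.exp (1/γ) / b ≤ L := by
    have : Real.log r ≤ -(Real.exp (1/γ)) / b := by
      calc Real.log r ≤ Real.log (Real.exp (-(Real.exp (1/γ)) / b)) :=
        Real.log_le_log hr0 hr
      _ = -(Real.exp (1/γ)) / b := Real.log_exp _
    rw [hLdef]
    rw [neg_div] at this
    linarith
  have hbinv : Real.exp (1/γ) ≤ Real.exp (1/γ) / b := by
    rw [le_div_iff₀ hb0]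
    nlinarith [hE]
  have hLpos : 0 < L := lt_of_lt_of_le (by positivity) hL
  have hu : Real.exp (1/γ) ≤ b * L := by
    rw [← div_le_iff₀' hb0] at *
    exact hL
  -- r^b ≤ exp(-e^{1/γ})
  have hrb : r ^ b = Real.exp (b * Real.log r) := by
    rw [← Real.exp_log hr0, ← Real.exp_mul, Real.log_exp, mul_comm]
  have hrb_le : r ^ b ≤ Real.exp (-(Real.exp (1/γ))) := by
    rw [hrb, Real.exp_le_exp]
    have : Real.exp (1/γ) ≤ b * L := hu
    rw [hLdef] at this
    nlinarith
  have hs_le : ‖Ψ x - Ψ y‖ ≤ r ^ b := hΨ x y hr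
  have hlogL : 0 < Real.log L := by
    apply Real.log_pos
    exact lt_of_lt_of_le (lt_of_lt_of_le hE1 hbinv) hL
  by_cases hs0 : ‖Ψ x - Ψ y‖ = 0
  · have hxy : Ψ x = Ψ y := by rwa [norm_sub_eq_zero_iff] at hs0
    rw [hxy, sub_self, abs_zero]
    have h1 : (0:ℝ) < b ^ (-γ) := Real.rpow_pos_of_pos hb0 _
    have h2 : (0:ℝ) < L ^ (-γ) := Real.rpow_pos_of_pos hLpos _
    positivity
  · have hs : 0 < ‖Ψ x - Ψ y‖ := lt_of_le_of_ne (norm_nonneg _) (Ne.symm hs0)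
    set s := ‖Ψ x - Ψ y‖ with hsdef
    have h1 := hω (Ψ x) (Ψ y) hs (le_trans hs_le hrb_le)
    -- -log s ≥ b*L
    have hls : b * L ≤ -Real.log s := by
      have : Real.log s ≤ b * Real.log r := by
        calc Real.log s ≤ Real.log (r ^ b) := Real.log_le_log hs hs_le
        _ = b * Real.log r := Real.log_rpow hr0 _
      rw [hLdef]; nlinarith
    have hmem1 : b * L ∈ Set.Ici (Real.exp (1/γ)) := hu
    have hmem2 : -Real.log s ∈ Set.Ici (Real.exp (1/γ)) := le_trans hu hls
    have h2 := aux_anti γ hγ0 hmem1 hmem2 hls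
    simp only at h2
    have h3 : (b * L) ^ (-γ) * Real.log (b * L) ≤ b ^ (-γ) * L ^ (-γ) * Real.log L := by
      rw [Real.mul_rpow hb0.le hLpos.le]
      have hlb : Real.log (b * L) ≤ Real.log L := by
        rw [Real.log_mul hb0.ne' hLpos.ne']
        have : Real.log b ≤ 0 := Real.log_nonpos hb0.le hb1
        linarith
      have hp : (0:ℝ) < b ^ (-γ) * L ^ (-γ) := by
        have := Real.rpow_pos_of_pos hb0 (-γ)
        have := Real.rpow_pos_of_pos hLpos (-γ)
        positivity
      exact mul_le_mul_of_nonneg_left hlb hp.le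
    calc |ω₀ (Ψ x) - ω₀ (Ψ y)| ≤ (-Real.log s) ^ (-γ) * Real.log (-Real.log s) := h1
    _ ≤ (b * L) ^ (-γ) * Real.log (b * L) := h2
    _ ≤ b ^ (-γ) * L ^ (-γ) * Real.log L := h3
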